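/- arXiv:2601.01542 — 5 statements merged into one kernel-verified Lean document; each statement's English description precedes it below -/
import Mathlib

section
/- Let G be a graph on n vertices with adjacency matrix A(G), and let H be a graph on m vertices with a root vertex v. Then the adjacency matrix of the rooted product G∘H^{(v)} can be written as A(H) ⊗ I_n + D_v ⊗ A(G), where D_v is the diagonal matrix with 1 in position (v,v) and ⊗ is the Kronecker product, under a suitable ordering of the vertices of G∘H^{(v)}. -/
open Matrix Kronecker

/-- The rooted product `G ∘ H^(v)`: take `n` copies of `H` (one for each vertex of `G`)
and identify the root `v` of the `i`-th copy with the `i`-th vertex of `G`.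
Vertices are pairs `(j, i)` with `j ∈ V(H)`, `i ∈ V(G)`, where `(v, i)` is vertex `i` of `G`. -/
def rootedProduct {n m : ℕ} (G : SimpleGraph (Fin n)) (H : SimpleGraph (Fin m)) (v : Fin m) :
    SimpleGraph (Fin m × Fin n) where
  Adj p q := (p.2 = q.2 ∧ H.Adj p.1 q.1) ∨ (p.1 = v ∧ q.1 = v ∧ G.Adj p.2 q.2)
  symm := by
    constructor
    rintro p q (⟨h1, h2⟩ | ⟨h1, h2, h3⟩)
    · exact Or.inl ⟨h1.symm, h2.symm⟩
    · exact Or.inr ⟨h2, h1, h3.symm⟩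
  loopless := by
    constructor
    rintro p (⟨_, h⟩ | ⟨_, _, h⟩)
    · exact H.loopless.irrefl _ h
    · exact G.loopless.irrefl _ h

instance {n m : ℕ} (G : SimpleGraph (Fin n)) (H : SimpleGraph (Fin m)) (v : Fin m)
    [DecidableRel G.Adj] [DecidableRel H.Adj] : DecidableRel (rootedProduct G H v).Adj :=
  fun _ _ => inferInstanceAs (Decidable (_ ∨ _))

/-- The adjacency matrix of the rooted product `G ∘ H^(v)` equals
`A(H) ⊗ I_n + D_v ⊗ A(G)`, where `D_v` has a single `1` at position `(v,v)`. -/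
theorem adjMatrix_rootedProduct {n m : ℕ} (G : SimpleGraph (Fin n)) (H : SimpleGraph (Fin m))
    (v : Fin m) [DecidableRel G.Adj] [DecidableRel H.Adj] :
    (rootedProduct G H v).adjMatrix ℝ =
      (H.adjMatrix ℝ) ⊗ₖ (1 : Matrix (Fin n) (Fin n) ℝ) +
        (Matrix.single v v (1 : ℝ)) ⊗ₖ (G.adjMatrix ℝ) := by
  ext ⟨j, i⟩ ⟨j', i'⟩
  simp only [SimpleGraph.adjMatrix_apply, Matrix.add_apply, kroneckerMap_apply, one_apply,
    Matrix.single, rootedProduct, of_apply]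
  by_cases h1 : i = i' <;> by_cases h2 : H.Adj j j' <;> by_cases h3 : j = v <;>
    by_cases h4 : j' = v <;> by_cases h5 : G.Adj i i' <;>
    simp_all [SimpleGraph.irrefl, eq_comm]
end

section
/- Let G be a graph and H^{(v)} a rooted graph with adjacency matrix M(H) and let M^{(v)}(H) be M(H) with the row and column of v deleted. Then det M(G∘H^{(v)}) = det( (det M(H))·I_n + (det M^{(v)}(H))·M(G) ), where M(G∘H^{(v)}) = M(H) ⊗ I_n + D_v ⊗ M(G). -/
open Matrix Kronecker

private lemma det_add_smul_stdBasis {m : ℕ} (A : Matrix (Fin (m + 1)) (Fin (m + 1)) ℝ)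
    (v : Fin (m + 1)) (c : ℝ) :
    (A + c • Matrix.single v v (1 : ℝ)).det =
      A.det + c * (A.submatrix v.succAbove v.succAbove).det := by
  have h : A + c • Matrix.single v v (1 : ℝ) =
      A.updateCol v ((fun i => A i v) + c • (Pi.single v 1 : Fin (m+1) → ℝ)) := by
    ext i j
    by_cases hj : j = v
    · subst hj
      simp [Matrix.updateCol_apply, Matrix.single, Pi.single_apply, eq_comm]
    · simp [Matrix.updateCol_apply, hj, Matrix.single, Ne.symm hj]
  have hsingle : (A.updateCol v (Pi.single v (1 : ℝ))).det =
      (A.submatrix v.succAbove v.succAbove).det := by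
    rw [Matrix.det_succ_column _ v]
    rw [Finset.sum_eq_single v]
    · simp [Matrix.updateCol_apply, Matrix.submatrix, fun a => (v.succAbove_ne a).symm,
        Even.neg_one_pow ⟨(v : ℕ), rfl⟩]
    · intro i _ hi
      simp [Matrix.updateCol_apply, Pi.single_apply, hi]
    · simp
  rw [h, Matrix.det_updateCol_add, Matrix.det_updateCol_smul, hsingle,
    Matrix.updateCol_eq_self]

/-- `det M(G∘H^(v)) = det((det M(H))·I_n + (det M^(v)(H))·M(G))`, where
`M(G∘H^(v)) = M(H) ⊗ I_n + D_v ⊗ M(G)` and `M^(v)(H)` is the principal submatrix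
of `M(H)` deleting row and column `v`. -/
theorem det_rootedProduct_matrix {n m : ℕ}
    (MG : Matrix (Fin n) (Fin n) ℝ) (hMG : MG.IsSymm)
    (MH : Matrix (Fin (m + 1)) (Fin (m + 1)) ℝ) (hMH : MH.IsSymm) (v : Fin (m + 1)) :
    (MH ⊗ₖ (1 : Matrix (Fin n) (Fin n) ℝ) +
        (Matrix.single v v (1 : ℝ)) ⊗ₖ MG).det =
      (MH.det • (1 : Matrix (Fin n) (Fin n) ℝ) +
        (MH.submatrix v.succAbove v.succAbove).det • MG).det := by
  have hHerm : MG.IsHermitian := by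
    rw [Matrix.IsHermitian, Matrix.conjTranspose_eq_transpose_of_trivial]
    exact hMG
  set U : Matrix (Fin n) (Fin n) ℝ := (hHerm.eigenvectorUnitary : Matrix (Fin n) (Fin n) ℝ)
    with hUdef
  set d : Fin n → ℝ := RCLike.ofReal ∘ hHerm.eigenvalues with hddef
  have hU : U * star U = 1 := Matrix.mem_unitaryGroup_iff.mp hHerm.eigenvectorUnitary.2
  have hspec : MG = U * Matrix.diagonal d * star U := hHerm.spectral_theorem
  set E := Matrix.single v v (1 : ℝ)
  set c := (MH.submatrix v.succAbove v.succAbove).det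
  have hU' : star U * U = 1 := Matrix.mem_unitaryGroup_iff'.mp hHerm.eigenvectorUnitary.2
  -- LHS
  have hL : MH ⊗ₖ (1 : Matrix (Fin n) (Fin n) ℝ) + E ⊗ₖ MG =
      ((1 : Matrix (Fin (m+1)) (Fin (m+1)) ℝ) ⊗ₖ U) *
        (MH ⊗ₖ (1 : Matrix (Fin n) (Fin n) ℝ) + E ⊗ₖ Matrix.diagonal d) *
        ((1 : Matrix (Fin (m+1)) (Fin (m+1)) ℝ) ⊗ₖ star U) := by
    simp only [Matrix.mul_add, Matrix.add_mul, ← Matrix.mul_kronecker_mul, Matrix.one_mul,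
      Matrix.mul_one, hU]
    rw [← hspec]
  have hblock : MH ⊗ₖ (1 : Matrix (Fin n) (Fin n) ℝ) + E ⊗ₖ Matrix.diagonal d =
      Matrix.blockDiagonal (fun k => MH + d k • E) := by
    ext ⟨i, k⟩ ⟨j, k'⟩
    simp only [Matrix.add_apply, Matrix.kroneckerMap_apply, Matrix.one_apply,
      Matrix.diagonal_apply, Matrix.blockDiagonal_apply, Matrix.smul_apply, smul_eq_mul]
    by_cases hk : k = k' <;> simp [hk] <;> ring
  have hLdet : (MH ⊗ₖ (1 : Matrix (Fin n) (Fin n) ℝ) + E ⊗ₖ MG).det =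
      ∏ k, (MH.det + d k * c) := by
    rw [hL, Matrix.det_mul, Matrix.det_mul, mul_comm, ← mul_assoc, ← Matrix.det_mul,
      ← Matrix.mul_kronecker_mul, Matrix.one_mul, hU', Matrix.one_kronecker_one, Matrix.det_one,
      one_mul, hblock, Matrix.det_blockDiagonal]
    refine Finset.prod_congr rfl fun k _ => ?_
    rw [det_add_smul_stdBasis]
  -- RHS
  have hR : MH.det • (1 : Matrix (Fin n) (Fin n) ℝ) + c • MG =
      U * (Matrix.diagonal fun k => MH.det + c * d k) * star U := by
    have : (Matrix.diagonal fun k => MH.det + c * d k) =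
        MH.det • (1 : Matrix (Fin n) (Fin n) ℝ) + c • Matrix.diagonal d := by
      ext i j
      by_cases hij : i = j <;>
        simp [Matrix.diagonal_apply, hij, Matrix.one_apply]
    rw [this, Matrix.mul_add, Matrix.add_mul, hspec]
    simp only [Matrix.mul_smul, Matrix.smul_mul, Matrix.mul_one]
    rw [hU]
  rw [hLdet, hR, Matrix.det_mul, Matrix.det_mul, mul_comm, ← mul_assoc, ← Matrix.det_mul,
    hU', Matrix.det_one, one_mul, Matrix.det_diagonal]
  exact Finset.prod_congr rfl fun k _ => by ring
end

section
/- Let A and B be n×n and m×m real symmetric matrices, and D_v the m×m diagonal matrix with a single 1 at position (v,v). If det B = ±1 and the principal submatrix B^{(v)} (deleting row/column v) has det B^{(v)} = 0, then det(B ⊗ I_n + D_v ⊗ A) = ±1 whenever det A = ±1. Similarly if det B = 0 and det B^{(v)} = ±1. -/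
open Matrix Kronecker

private lemma pm_pow (ε : ℝ) (h : ε = 1 ∨ ε = -1) (n : ℕ) : ε ^ n = 1 ∨ ε ^ n = -1 := by
  rcases h with h | h
  · left; simp [h]
  · subst h
    rcases Nat.even_or_odd n with hn | hn
    · left; exact hn.neg_one_pow
    · right; exact hn.neg_one_pow

private lemma adj_vv {m : ℕ} (B : Matrix (Fin (m + 1)) (Fin (m + 1)) ℝ) (v : Fin (m + 1)) :
    B.adjugate v v = (B.submatrix v.succAbove v.succAbove).det := by
  rw [Matrix.adjugate_apply, Matrix.det_succ_row _ v, Finset.sum_eq_single v]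
  · have hsub : (B.updateRow v (Pi.single v 1)).submatrix v.succAbove v.succAbove
        = B.submatrix v.succAbove v.succAbove := by
      ext i j
      simp [Matrix.updateRow_apply, Fin.succAbove_ne]
    rw [hsub]
    simp only [Matrix.updateRow_self, Pi.single_eq_same, mul_one, ← two_mul, pow_mul]
    norm_num
  · intro j _ hj
    simp [Matrix.updateRow_apply, Pi.single_apply, hj]
  · intro h; exact absurd (Finset.mem_univ v) h

private lemma key {n m : ℕ} (A : Matrix (Fin n) (Fin n) ℝ)
    (B : Matrix (Fin (m + 1)) (Fin (m + 1)) ℝ) (v : Fin (m + 1)) (ε : ℝ)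
    (hε : ε * ε = 1) (hdet : B.det = ε) :
    (B ⊗ₖ (1 : Matrix (Fin n) (Fin n) ℝ) + (Matrix.single v v (1 : ℝ)) ⊗ₖ A).det
      = ε ^ n * (1 + (ε * (B.submatrix v.succAbove v.succAbove).det) • A).det := by
  classical
  set Dv : Matrix (Fin (m + 1)) (Fin (m + 1)) ℝ := Matrix.single v v (1 : ℝ) with hDv
  set C : Matrix (Fin (m + 1)) (Fin (m + 1)) ℝ := ε • B.adjugate with hC
  have hBC : B * C = 1 := by
    rw [hC, Matrix.mul_smul, Matrix.mul_adjugate, hdet, smul_smul, hε, one_smul]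
  set u : Fin (m + 1) → ℝ := fun i => C i v with hu
  set w : Fin (m + 1) → ℝ := Pi.single v (1 : ℝ) with hw
  have hCD : C * Dv = Matrix.replicateCol (Fin 1) u * Matrix.replicateRow (Fin 1) w := by
    ext i j
    simp only [Matrix.mul_apply, hDv, Matrix.single, Matrix.of_apply, ite_and,
      Finset.sum_ite_eq, Finset.mem_univ, if_true, Matrix.replicateCol_apply, Matrix.replicateRow_apply,
      Fin.sum_univ_one]
    rcases eq_or_ne j v with rfl | hjv
    · simp [hw, hu]
    · simp [hw, Pi.single_apply, hjv, Ne.symm hjv]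
  have hfac : B ⊗ₖ (1 : Matrix (Fin n) (Fin n) ℝ) + Dv ⊗ₖ A
      = (B ⊗ₖ (1 : Matrix (Fin n) (Fin n) ℝ)) * (1 + (C * Dv) ⊗ₖ A) := by
    rw [Matrix.mul_add, Matrix.mul_one, ← Matrix.mul_kronecker_mul, ← Matrix.mul_assoc,
      hBC, Matrix.one_mul, Matrix.one_mul]
  have hc : Matrix.replicateRow (Fin 1) w * Matrix.replicateCol (Fin 1) u
      = (ε * (B.submatrix v.succAbove v.succAbove).det) • (1 : Matrix (Fin 1) (Fin 1) ℝ) := by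
    ext i j
    fin_cases i; fin_cases j
    simp [Matrix.mul_apply, hw, Pi.single_apply, hu, hC, adj_vv]
  have h2 : (1 + (C * Dv) ⊗ₖ A).det
      = (1 + (ε * (B.submatrix v.succAbove v.succAbove).det) • A).det := by
    rw [hCD]
    have hsplit : (Matrix.replicateCol (Fin 1) u * Matrix.replicateRow (Fin 1) w) ⊗ₖ A
        = (Matrix.replicateCol (Fin 1) u ⊗ₖ (1 : Matrix (Fin n) (Fin n) ℝ))
          * (Matrix.replicateRow (Fin 1) w ⊗ₖ A) := by
      rw [← Matrix.mul_kronecker_mul, Matrix.one_mul]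
    rw [hsplit, Matrix.det_one_add_mul_comm, ← Matrix.mul_kronecker_mul, hc, Matrix.mul_one,
      Matrix.smul_kronecker]
    have h3 : (1 : Matrix (Fin 1 × Fin n) (Fin 1 × Fin n) ℝ)
        + (ε * (B.submatrix v.succAbove v.succAbove).det)
            • ((1 : Matrix (Fin 1) (Fin 1) ℝ) ⊗ₖ A)
        = (1 : Matrix (Fin 1) (Fin 1) ℝ)
            ⊗ₖ (1 + (ε * (B.submatrix v.succAbove v.succAbove).det) • A) := by
      rw [Matrix.kronecker_add, Matrix.one_kronecker_one, Matrix.kronecker_smul]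
    rw [h3, Matrix.det_kronecker]
    simp
  rw [hfac, Matrix.det_mul, Matrix.det_kronecker, hdet, Matrix.det_one, one_pow, mul_one, h2]
  simp

/-- If either (`det B = ±1` and `det B^(v) = 0`) or (`det B = 0` and `det B^(v) = ±1`),
where `B^(v)` is `B` with row and column `v` deleted, then for any symmetric `A` with
`det A = ±1` we have `det (B ⊗ I_n + D_v ⊗ A) = ±1`. -/
theorem det_kronecker_pm_one {n m : ℕ}
    (A : Matrix (Fin n) (Fin n) ℝ) (hA : A.IsSymm)
    (B : Matrix (Fin (m + 1)) (Fin (m + 1)) ℝ) (hB : B.IsSymm) (v : Fin (m + 1))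
    (hBv : ((B.det = 1 ∨ B.det = -1) ∧ (B.submatrix v.succAbove v.succAbove).det = 0) ∨
      (B.det = 0 ∧ ((B.submatrix v.succAbove v.succAbove).det = 1 ∨
        (B.submatrix v.succAbove v.succAbove).det = -1)))
    (hAdet : A.det = 1 ∨ A.det = -1) :
    (B ⊗ₖ (1 : Matrix (Fin n) (Fin n) ℝ) +
        (Matrix.single v v (1 : ℝ)) ⊗ₖ A).det = 1 ∨
      (B ⊗ₖ (1 : Matrix (Fin n) (Fin n) ℝ) +
        (Matrix.single v v (1 : ℝ)) ⊗ₖ A).det = -1 := by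
  classical
  rcases hBv with ⟨hd, h0⟩ | ⟨h0, hd⟩
  · -- det B = ±1, det B^(v) = 0
    have hε : B.det * B.det = 1 := by rcases hd with h | h <;> rw [h] <;> norm_num
    rw [key A B v B.det hε rfl, h0]
    simp only [mul_zero, zero_smul, add_zero, Matrix.det_one, mul_one]
    exact pm_pow _ hd n
  · -- det B = 0, det B^(v) = ±1
    set ε : ℝ := (B.submatrix v.succAbove v.succAbove).det with hεdef
    set B' : Matrix (Fin (m + 1)) (Fin (m + 1)) ℝ := B + Matrix.single v v ε with hB'
    have hεsq : ε * ε = 1 := by rcases hd with h | h <;> rw [h] <;> norm_num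
    have hupd : B' = B.updateRow v (B v + Pi.single v ε) := by
      ext i j
      by_cases hi : i = v
      · subst hi
        simp [hB', Matrix.single, Pi.single_apply, eq_comm]
      · rw [hB', Matrix.add_apply, Matrix.updateRow_ne hi,
          Matrix.single_apply_of_row_ne (Ne.symm hi), add_zero]
    have hdetB' : B'.det = 1 := by
      rw [hupd]
      have hsingle : (Pi.single v ε : Fin (m + 1) → ℝ)
          = ε • (Pi.single v (1 : ℝ) : Fin (m + 1) → ℝ) := by
        ext j; simp [Pi.single_apply]
      rw [Matrix.det_updateRow_add, Matrix.updateRow_eq_self, hsingle,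
        Matrix.det_updateRow_smul, ← Matrix.adjugate_apply, adj_vv, h0, hεsq, zero_add]
    have hsub' : B'.submatrix v.succAbove v.succAbove = B.submatrix v.succAbove v.succAbove := by
      ext i j
      rw [hB', Matrix.submatrix_apply, Matrix.add_apply,
        Matrix.single_apply_of_row_ne (Ne.symm (Fin.succAbove_ne v i)), add_zero,
        Matrix.submatrix_apply]
    have hbig : B ⊗ₖ (1 : Matrix (Fin n) (Fin n) ℝ) + (Matrix.single v v (1 : ℝ)) ⊗ₖ A
        = B' ⊗ₖ (1 : Matrix (Fin n) (Fin n) ℝ)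
          + (Matrix.single v v (1 : ℝ)) ⊗ₖ (A - ε • 1) := by
      have h1 : Matrix.single v v ε = ε • Matrix.single v v (1 : ℝ) := by
        rw [Matrix.smul_single]; simp
      have h5 : A - ε • (1 : Matrix (Fin n) (Fin n) ℝ)
          = A + (-ε) • (1 : Matrix (Fin n) (Fin n) ℝ) := by
        rw [neg_smul, ← sub_eq_add_neg]
      rw [hB', Matrix.add_kronecker, h5, Matrix.kronecker_add, h1, Matrix.smul_kronecker,
        Matrix.kronecker_smul, neg_smul]
      abel
    rw [hbig, key (A - ε • 1) B' v 1 (by norm_num) hdetB', hsub']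
    have h4 : (1 : Matrix (Fin n) (Fin n) ℝ)
        + (1 * ε) • (A - ε • (1 : Matrix (Fin n) (Fin n) ℝ)) = ε • A := by
      rw [one_mul, smul_sub, smul_smul, hεsq, one_smul]
      abel
    rw [h4, Matrix.det_smul]
    simp only [one_pow, one_mul, Fintype.card_fin]
    rcases pm_pow ε hd n with h | h <;> rcases hAdet with h' | h' <;>
      rw [h, h'] <;> norm_num
end

section
/- Let f(x) = det(xI − M(H)) and g(x) = det(xI − M^{(v)}(H)) where M(H) is m×m and M^{(v)}(H) is the principal submatrix deleting row/column v. For scalars λ₁ ≠ λ₂, let μ₁^{(j)} (resp. μ₂^{(j)}), j = 1,…,m, be the roots (with multiplicity) of f − λ₁g (resp. f − λ₂g). Then ∏_{j₁=1}^m ∏_{j₂=1}^m (μ₂^{(j₂)} − μ₁^{(j₁)}) = (λ₂ − λ₁)^m · Res(f, g). -/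
open Matrix Polynomial

/-- The Sylvester matrix of `f` and `g` (with `g.natDegree` rows of coefficients of `f`
and `f.natDegree` rows of coefficients of `g`, written in descending order). -/
noncomputable def sylvester {R : Type*} [CommRing R] (f g : Polynomial R) :
    Matrix (Fin (g.natDegree + f.natDegree)) (Fin (g.natDegree + f.natDegree)) R :=
  Matrix.of fun i j =>
    if (i : ℕ) < g.natDegree then
      if (i : ℕ) ≤ (j : ℕ) ∧ (j : ℕ) ≤ (i : ℕ) + f.natDegree then
        f.coeff ((i : ℕ) + f.natDegree - (j : ℕ))
      else 0
    else
      if (i : ℕ) - g.natDegree ≤ (j : ℕ) ∧ (j : ℕ) ≤ (i : ℕ) - g.natDegree + g.natDegree then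
        g.coeff ((i : ℕ) - g.natDegree + g.natDegree - (j : ℕ))
      else 0

/-- The resultant of two polynomials, as the determinant of their Sylvester matrix. -/
noncomputable def resultant {R : Type*} [CommRing R] (f g : Polynomial R) : R :=
  (_root_.sylvester f g).det

noncomputable def tg (g : Polynomial ℂ) (a : ℂ) (N₁ k : ℕ) : ℂ :=
  ∑ d ∈ Finset.range (k + 1), g.coeff (N₁ - k + d) * a ^ d

lemma tg_succ (g : Polynomial ℂ) (a : ℂ) (N₁ k : ℕ) (hk : k + 1 ≤ N₁) :
    tg g a N₁ (k + 1) = g.coeff (N₁ - (k + 1)) + a * tg g a N₁ k := by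
  unfold tg
  rw [Finset.sum_range_succ' (fun d => g.coeff (N₁ - (k+1) + d) * a ^ d)]
  rw [add_comm, Finset.mul_sum]
  congr 1
  · simp
  · apply Finset.sum_congr rfl
    intro d _
    have h1 : N₁ - (k + 1) + (d + 1) = N₁ - k + d := by omega
    rw [h1]; ring1

lemma tg_last (g : Polynomial ℂ) (a : ℂ) (N₁ : ℕ) (h : g.natDegree ≤ N₁) :
    tg g a N₁ N₁ = g.eval a := by
  unfold tg
  rw [eval_eq_sum_range' (Nat.lt_succ_of_le h)]
  apply Finset.sum_congr rfl
  intro d _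
  congr 2
  omega


/-- `ℕ`-indexed entries of the Sylvester matrix. -/
noncomputable def entSyl (f g : Polynomial ℂ) (m n iv lv : ℕ) : ℂ :=
  if iv < m then
    if iv ≤ lv ∧ lv ≤ iv + n then f.coeff (iv + n - lv) else 0
  else
    if iv - m ≤ lv ∧ lv ≤ iv - m + m then g.coeff (iv - m + m - lv) else 0

lemma sylvester_apply (f g : Polynomial ℂ) (i j : Fin (g.natDegree + f.natDegree)) :
    _root_.sylvester f g i j = entSyl f g g.natDegree f.natDegree (i : ℕ) (j : ℕ) := rfl

/-- `ℕ`-indexed entries of the bordered matrix. -/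
noncomputable def entB (f₁ g : Polynomial ℂ) (a : ℂ) (m n₁ iv lv : ℕ) : ℂ :=
  if iv < m + n₁ then
    (if lv < m + n₁ then entSyl f₁ g m n₁ iv lv else 0)
  else tg g a (m + n₁) lv

noncomputable def Bmat (f₁ g : Polynomial ℂ) (a : ℂ) :
    Matrix (Fin (g.natDegree + f₁.natDegree + 1)) (Fin (g.natDegree + f₁.natDegree + 1)) ℂ :=
  Matrix.of fun i k => entB f₁ g a g.natDegree f₁.natDegree (i : ℕ) (k : ℕ)

/-- The key entrywise identity. -/
lemma key_entry (f₁ g f : Polynomial ℂ) (a : ℂ) (m n₁ : ℕ)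
    (hgd : g.natDegree ≤ m) (hf1d : f₁.natDegree ≤ n₁)
    (hfc : ∀ e : ℕ, f.coeff e = (if e = 0 then 0 else f₁.coeff (e - 1)) - a * f₁.coeff e)
    (iv lv : ℕ) (hi : iv < m + n₁ + 1) (hl : lv < m + n₁ + 1) :
    entB f₁ g a m n₁ iv lv - a * (if 0 < lv then entB f₁ g a m n₁ iv (lv - 1) else 0) =
      entSyl f g m (n₁ + 1) iv lv -
        a * (if iv + 1 < m + n₁ + 1 ∧ m ≤ iv then entSyl f g m (n₁ + 1) (iv + 1) lv else 0) := by
  have hg0 : ∀ k, m < k → g.coeff k = 0 :=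
    fun k hk => coeff_eq_zero_of_natDegree_lt (by omega)
  have hf10 : ∀ k, n₁ < k → f₁.coeff k = 0 :=
    fun k hk => coeff_eq_zero_of_natDegree_lt (by omega)
  unfold entB entSyl
  by_cases hA : iv < m
  · -- f-rows
    rw [if_neg (show ¬(iv + 1 < m + n₁ + 1 ∧ m ≤ iv) from by omega), mul_zero, sub_zero,
      if_pos hA]
    simp only [if_pos (show iv < m + n₁ from by omega), if_pos hA]
    by_cases h2 : iv ≤ lv
    · by_cases h3 : lv ≤ iv + n₁
      · rw [if_pos (show lv < m + n₁ from by omega),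
          if_pos (show iv ≤ lv ∧ lv ≤ iv + n₁ from ⟨h2, h3⟩),
          if_pos (show iv ≤ lv ∧ lv ≤ iv + (n₁ + 1) from by omega), hfc,
          if_neg (show ¬(iv + (n₁ + 1) - lv = 0) from by omega),
          show iv + (n₁ + 1) - lv - 1 = iv + n₁ - lv from by omega]
        by_cases h4 : iv + 1 ≤ lv
        · rw [if_pos (show 0 < lv from by omega), if_pos (show lv - 1 < m + n₁ from by omega),
            if_pos (show iv ≤ lv - 1 ∧ lv - 1 ≤ iv + n₁ from by omega),
            show iv + n₁ - (lv - 1) = iv + (n₁ + 1) - lv from by omega]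
          try ring1
        · rw [hf10 (iv + (n₁ + 1) - lv) (by omega)]
          have hz : (if 0 < lv then
              (if lv - 1 < m + n₁ then
                (if iv ≤ lv - 1 ∧ lv - 1 ≤ iv + n₁ then f₁.coeff (iv + n₁ - (lv - 1)) else 0)
               else 0) else 0) = 0 := by
            by_cases h0 : 0 < lv
            · rw [if_pos h0, if_neg (show ¬(iv ≤ lv - 1 ∧ lv - 1 ≤ iv + n₁) from by omega)]
              simp only [ite_self]
            · rw [if_neg h0]
          rw [hz]
          try ring1
      · rw [if_neg (show ¬(iv ≤ lv ∧ lv ≤ iv + n₁) from by omega)]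
        by_cases h4 : lv = iv + n₁ + 1
        · rw [if_pos (show iv ≤ lv ∧ lv ≤ iv + (n₁ + 1) from by omega), hfc,
            if_pos (show iv + (n₁ + 1) - lv = 0 from by omega),
            if_pos (show 0 < lv from by omega), if_pos (show lv - 1 < m + n₁ from by omega),
            if_pos (show iv ≤ lv - 1 ∧ lv - 1 ≤ iv + n₁ from by omega),
            show iv + n₁ - (lv - 1) = 0 from by omega,
            show f₁.coeff (iv + (n₁ + 1) - lv) = f₁.coeff 0 from by
              rw [show iv + (n₁ + 1) - lv = 0 from by omega]]
          simp only [ite_self]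
          try ring1
        · rw [if_neg (show ¬(iv ≤ lv ∧ lv ≤ iv + (n₁ + 1)) from by omega),
            if_neg (show ¬(iv ≤ lv - 1 ∧ lv - 1 ≤ iv + n₁) from by omega)]
          simp only [ite_self]
          simp
    · rw [if_neg (show ¬(iv ≤ lv ∧ lv ≤ iv + n₁) from by omega),
        if_neg (show ¬(iv ≤ lv - 1 ∧ lv - 1 ≤ iv + n₁) from by omega),
        if_neg (show ¬(iv ≤ lv ∧ lv ≤ iv + (n₁ + 1)) from by omega)]
      simp only [ite_self]
      simp
  · by_cases hB : iv < m + n₁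
    · -- middle g-rows
      rw [if_pos (show iv + 1 < m + n₁ + 1 ∧ m ≤ iv from by omega),
        if_neg (show ¬ iv + 1 < m from by omega), if_neg hA,
        show iv + 1 - m + m = iv + 1 from by omega]
      simp only [if_pos hB, if_neg hA, show iv - m + m = iv from by omega]
      by_cases hc1 : iv - m ≤ lv ∧ lv ≤ iv
      · rw [if_pos (show lv < m + n₁ from by omega), if_pos hc1]
        by_cases hc2 : iv + 1 - m ≤ lv
        · rw [if_pos (show iv + 1 - m ≤ lv ∧ lv ≤ iv + 1 from by omega),
            if_pos (show 0 < lv from by omega), if_pos (show lv - 1 < m + n₁ from by omega),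
            if_pos (show iv - m ≤ lv - 1 ∧ lv - 1 ≤ iv from by omega),
            show iv - (lv - 1) = iv + 1 - lv from by omega]
          try ring1
        · rw [if_neg (show ¬(iv + 1 - m ≤ lv ∧ lv ≤ iv + 1) from by omega)]
          have hz : (if 0 < lv then
              (if lv - 1 < m + n₁ then
                (if iv - m ≤ lv - 1 ∧ lv - 1 ≤ iv then g.coeff (iv - (lv - 1)) else 0)
               else 0) else 0) = 0 := by
            by_cases h0 : 0 < lv
            · rw [if_pos h0, if_neg (show ¬(iv - m ≤ lv - 1 ∧ lv - 1 ≤ iv) from by omega)]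
              simp only [ite_self]
            · rw [if_neg h0]
          rw [hz]
      · simp only [if_neg hc1]
        simp only [ite_self]
        by_cases hc2 : iv + 1 - m ≤ lv ∧ lv ≤ iv + 1
        · rw [if_pos hc2, if_pos (show 0 < lv from by omega),
            if_pos (show lv - 1 < m + n₁ from by omega),
            if_pos (show iv - m ≤ lv - 1 ∧ lv - 1 ≤ iv from by omega),
            show iv - (lv - 1) = iv + 1 - lv from by omega]
          try ring1
        · rw [if_neg hc2]
          have hz : (if 0 < lv then
              (if lv - 1 < m + n₁ then
                (if iv - m ≤ lv - 1 ∧ lv - 1 ≤ iv then g.coeff (iv - (lv - 1)) else 0)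
               else 0) else 0) = 0 := by
            by_cases h0 : 0 < lv
            · rw [if_pos h0]
              by_cases h1 : iv - m ≤ lv - 1 ∧ lv - 1 ≤ iv
              · exfalso; omega
              · rw [if_neg h1]; simp only [ite_self]
            · rw [if_neg h0]
          rw [hz]
          try simp
    · -- last row
      have hC : iv = m + n₁ := by omega
      subst hC
      rw [if_neg (show ¬ (m + n₁ + 1 < m + n₁ + 1 ∧ m ≤ m + n₁) from by omega), mul_zero,
        sub_zero, if_neg (lt_irrefl _), if_neg (lt_irrefl _), if_neg hA,
        show m + n₁ - m + m = m + n₁ from by omega, show m + n₁ - m = n₁ from by omega]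
      by_cases hlv : 0 < lv
      · obtain ⟨k, rfl⟩ : ∃ k, lv = k + 1 := ⟨lv - 1, by omega⟩
        rw [if_pos hlv, tg_succ g a (m + n₁) k (by omega)]
        simp only [Nat.add_sub_cancel]
        by_cases h1 : n₁ ≤ k + 1 ∧ k + 1 ≤ m + n₁
        · rw [if_pos h1]; ring1
        · rw [if_neg h1, hg0 (m + n₁ - (k + 1)) (by omega)]; ring1
      · rw [if_neg hlv]
        have h0 : lv = 0 := by omega
        subst h0
        unfold tg
        rw [Finset.sum_range_one]
        by_cases h1 : n₁ ≤ 0 ∧ 0 ≤ m + n₁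
        · rw [if_pos h1]; simp
        · rw [if_neg h1, hg0 (m + n₁ - 0 + 0) (by omega)]; simp

noncomputable def shiftR (a : ℂ) (N : ℕ) : Matrix (Fin N) (Fin N) ℂ :=
  Matrix.of fun j l => if j = l then 1 else if (l : ℕ) = (j : ℕ) + 1 then -a else 0

noncomputable def shiftL (a : ℂ) (m N : ℕ) : Matrix (Fin N) (Fin N) ℂ :=
  Matrix.of fun i i' =>
    if i = i' then 1 else if (i' : ℕ) = (i : ℕ) + 1 ∧ m ≤ (i : ℕ) then -a else 0

lemma det_shiftR (a : ℂ) (N : ℕ) : (shiftR a N).det = 1 := by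
  rw [Matrix.det_of_upperTriangular]
  · apply Finset.prod_eq_one; intro i _; simp [shiftR]
  · intro i j hij
    have hv : (j : ℕ) < (i : ℕ) := hij
    simp only [shiftR, Matrix.of_apply]
    rw [if_neg (fun h => by rw [Fin.ext_iff] at h; omega), if_neg (by omega)]

lemma det_shiftL (a : ℂ) (m N : ℕ) : (shiftL a m N).det = 1 := by
  rw [Matrix.det_of_upperTriangular]
  · apply Finset.prod_eq_one; intro i _; simp [shiftL]
  · intro i j hij
    have hv : (j : ℕ) < (i : ℕ) := hij
    simp only [shiftL, Matrix.of_apply]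
    rw [if_neg (fun h => by rw [Fin.ext_iff] at h; omega), if_neg (by omega)]

lemma mul_shiftR (N : ℕ) (M : Matrix (Fin N) (Fin N) ℂ) (a : ℂ) (i l : Fin N) :
    (M * shiftR a N) i l =
      M i l - a * (if h : 0 < (l : ℕ) then M i ⟨(l : ℕ) - 1, by omega⟩ else 0) := by
  rw [Matrix.mul_apply]
  by_cases hl : 0 < (l : ℕ)
  · rw [dif_pos hl]
    set l' : Fin N := ⟨(l : ℕ) - 1, by omega⟩ with hl'
    have hvl' : (l' : ℕ) = (l : ℕ) - 1 := rfl
    have hne : l ≠ l' := fun h => by rw [Fin.ext_iff, hvl'] at h; omega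
    rw [Finset.sum_eq_add_of_mem l l' (Finset.mem_univ _) (Finset.mem_univ _) hne
      (fun k _ hk => by
        have h1 : k ≠ l := hk.1
        have h2 : (k : ℕ) ≠ (l : ℕ) - 1 := fun h => hk.2 (Fin.ext (by rw [hvl']; omega))
        simp only [shiftR, Matrix.of_apply]
        rw [if_neg h1, if_neg (by omega), mul_zero])]
    simp only [shiftR, Matrix.of_apply, if_pos rfl]
    rw [if_neg hne.symm, if_pos (show (l:ℕ) = (l:ℕ) - 1 + 1 from by omega)]
    simp only [if_true]; ring
  · rw [dif_neg hl]
    rw [Finset.sum_eq_single l]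
    · simp [shiftR]
    · intro k _ hk
      simp only [shiftR, Matrix.of_apply]
      rw [if_neg hk, if_neg (by omega), mul_zero]
    · exact fun h => absurd (Finset.mem_univ l) h

lemma shiftL_mul (N : ℕ) (M : Matrix (Fin N) (Fin N) ℂ) (a : ℂ) (m : ℕ) (i l : Fin N) :
    (shiftL a m N * M) i l =
      M i l - a * (if h : (i : ℕ) + 1 < N ∧ m ≤ (i : ℕ) then M ⟨(i : ℕ) + 1, h.1⟩ l else 0) := by
  rw [Matrix.mul_apply]
  by_cases hi : (i : ℕ) + 1 < N ∧ m ≤ (i : ℕ)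
  · rw [dif_pos hi]
    set i' : Fin N := ⟨(i : ℕ) + 1, hi.1⟩ with hi'
    have hvi' : (i' : ℕ) = (i : ℕ) + 1 := rfl
    have hne : i ≠ i' := fun h => by rw [Fin.ext_iff, hvi'] at h; omega
    rw [Finset.sum_eq_add_of_mem i i' (Finset.mem_univ _) (Finset.mem_univ _) hne
      (fun k _ hk => by
        have h1 : i ≠ k := fun h => hk.1 h.symm
        have h2 : (k : ℕ) ≠ (i : ℕ) + 1 := fun h => hk.2 (Fin.ext (by rw [hvi', h]))
        simp only [shiftL, Matrix.of_apply]
        rw [if_neg h1, if_neg (by tauto), zero_mul])]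
    simp only [shiftL, Matrix.of_apply, if_pos rfl]
    rw [if_neg hne, if_pos (show (i' : ℕ) = (i : ℕ) + 1 ∧ m ≤ (i:ℕ) from ⟨hvi', hi.2⟩)]
    simp only [if_true]; ring
  · rw [dif_neg hi]
    rw [Finset.sum_eq_single i]
    · simp [shiftL]
    · intro k _ hk
      simp only [shiftL, Matrix.of_apply]
      rw [if_neg (fun h => hk h.symm), if_neg (fun h => hi (by omega)), zero_mul]
    · exact fun h => absurd (Finset.mem_univ i) h

lemma Bmat_apply (f₁ g : Polynomial ℂ) (a : ℂ) (i k : Fin (g.natDegree + f₁.natDegree + 1)) :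
    Bmat f₁ g a i k = entB f₁ g a g.natDegree f₁.natDegree (i : ℕ) (k : ℕ) := rfl

lemma det_syl_step (f₁ g : Polynomial ℂ) (hf₁ : f₁.Monic) (hg : g.Monic) (a : ℂ) :
    (_root_.sylvester ((X - C a) * f₁) g).det = g.eval a * (_root_.sylvester f₁ g).det := by
  set m := g.natDegree with hm
  set n₁ := f₁.natDegree with hn
  have hfd : ((X - C a) * f₁).natDegree = n₁ + 1 := by
    rw [natDegree_mul (X_sub_C_ne_zero a) hf₁.ne_zero, natDegree_X_sub_C]; omega
  have hN : m + n₁ + 1 = m + ((X - C a) * f₁).natDegree := by omega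
  set S' := (_root_.sylvester ((X - C a) * f₁) g).submatrix (finCongr hN) (finCongr hN) with hS'
  have hdetS' : S'.det = (_root_.sylvester ((X - C a) * f₁) g).det :=
    Matrix.det_submatrix_equiv_self (finCongr hN) _
  have hfc : ∀ e : ℕ, ((X - C a) * f₁).coeff e =
      (if e = 0 then 0 else f₁.coeff (e - 1)) - a * f₁.coeff e := by
    intro e
    rw [sub_mul, Polynomial.coeff_sub, coeff_C_mul]
    cases e with
    | zero => simp
    | succ e' => rw [coeff_X_mul]; simp
  have hSent : ∀ i l : Fin (m + n₁ + 1),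
      S' i l = entSyl ((X - C a) * f₁) g m (n₁ + 1) (i : ℕ) (l : ℕ) := by
    intro i l
    rw [hS', Matrix.submatrix_apply, sylvester_apply]
    simp [hfd]
    rfl
  have hmain : Bmat f₁ g a * shiftR a (m + n₁ + 1) = shiftL a m (m + n₁ + 1) * S' := by
    ext i l
    rw [mul_shiftR, shiftL_mul, Bmat_apply, hSent]
    have hkey := key_entry f₁ g ((X - C a) * f₁) a m n₁ le_rfl le_rfl hfc
      (i : ℕ) (l : ℕ) i.isLt l.isLt
    by_cases hl0 : 0 < (l : ℕ)
    · rw [dif_pos hl0, Bmat_apply]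
      by_cases hi0 : (i : ℕ) + 1 < m + n₁ + 1 ∧ m ≤ (i : ℕ)
      · rw [dif_pos hi0, hSent]
        rw [if_pos hl0, if_pos hi0] at hkey
        exact hkey
      · rw [dif_neg hi0]
        rw [if_pos hl0, if_neg hi0] at hkey
        exact hkey
    · rw [dif_neg hl0]
      by_cases hi0 : (i : ℕ) + 1 < m + n₁ + 1 ∧ m ≤ (i : ℕ)
      · rw [dif_pos hi0, hSent]
        rw [if_neg hl0, if_pos hi0] at hkey
        exact hkey
      · rw [dif_neg hi0]
        rw [if_neg hl0, if_neg hi0] at hkey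
        exact hkey
  have hdet1 : (Bmat f₁ g a).det = S'.det := by
    have h := congrArg Matrix.det hmain
    rwa [Matrix.det_mul, Matrix.det_mul, det_shiftR, det_shiftL, mul_one, one_mul] at h
  have hdet2 : (Bmat f₁ g a).det = g.eval a * (_root_.sylvester f₁ g).det := by
    rw [Matrix.det_succ_column (Bmat f₁ g a) (Fin.last (m + n₁)),
      Finset.sum_eq_single (Fin.last (m + n₁))]
    · rw [Fin.succAbove_last]
      have hBll : Bmat f₁ g a (Fin.last (m + n₁)) (Fin.last (m + n₁)) = g.eval a := by
        rw [Bmat_apply]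
        unfold entB
        rw [if_neg (by simp [Fin.val_last, hm, hn]), Fin.val_last, tg_last g a (m + n₁) (by omega)]
      have hsub : (Bmat f₁ g a).submatrix Fin.castSucc Fin.castSucc = _root_.sylvester f₁ g := by
        ext i k
        rw [Matrix.submatrix_apply, Bmat_apply]
        unfold entB
        rw [if_pos (show ((Fin.castSucc i : Fin (m + n₁ + 1)) : ℕ) < m + n₁ from i.isLt),
          if_pos (show ((Fin.castSucc k : Fin (m + n₁ + 1)) : ℕ) < m + n₁ from k.isLt),
          sylvester_apply]
        simp
      rw [hBll, hsub, Fin.val_last]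
      have hpow : ((-1 : ℂ)) ^ ((m + n₁) + (m + n₁)) = 1 := Even.neg_one_pow ⟨m + n₁, rfl⟩
      rw [hpow]; ring
    · intro i _ hne
      have hne' : (i : ℕ) ≠ m + n₁ := fun h => hne (by rw [Fin.ext_iff, Fin.val_last]; exact h)
      have hz : Bmat f₁ g a i (Fin.last (m + n₁)) = 0 := by
        rw [Bmat_apply]
        unfold entB
        rw [if_pos (show (i : ℕ) < m + n₁ from by have := i.isLt; omega),
          if_neg (by simp [Fin.val_last, hm, hn])]
      rw [hz, mul_zero, zero_mul]
    · simp
  rw [← hdetS', ← hdet1, hdet2]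

lemma sylvester_one (g : Polynomial ℂ) :
    _root_.sylvester (1 : Polynomial ℂ) g = 1 := by
  ext i j
  have h10 : (1 : Polynomial ℂ).natDegree = 0 := natDegree_one
  have hij : (j : ℕ) < g.natDegree + (1 : Polynomial ℂ).natDegree := j.isLt
  have hii : (i : ℕ) < g.natDegree + (1 : Polynomial ℂ).natDegree := i.isLt
  simp only [_root_.sylvester, Matrix.of_apply]
  rw [if_pos (show (i : ℕ) < g.natDegree from by omega)]
  by_cases h : (i : ℕ) = (j : ℕ)
  · rw [if_pos (show (i : ℕ) ≤ (j : ℕ) ∧ (j : ℕ) ≤ (i : ℕ) + (1 : Polynomial ℂ).natDegree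
        from by omega),
      show (i : ℕ) + (1 : Polynomial ℂ).natDegree - (j : ℕ) = 0 from by omega,
      show i = j from Fin.ext h, Matrix.one_apply_eq]
    simp
  · rw [if_neg (show ¬((i : ℕ) ≤ (j : ℕ) ∧ (j : ℕ) ≤ (i : ℕ) + (1 : Polynomial ℂ).natDegree)
        from by omega),
      Matrix.one_apply_ne (fun hh => h (by rw [hh]))]

lemma resultant_eq_prod (f g : Polynomial ℂ) (hf : f.Monic) (hg : g.Monic) :
    _root_.resultant f g = (f.roots.map g.eval).prod := by
  unfold _root_.resultant
  suffices H : ∀ n (f : Polynomial ℂ), f.Monic → f.natDegree = n →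
      (_root_.sylvester f g).det = (f.roots.map g.eval).prod from H f.natDegree f hf rfl
  intro n
  induction n with
  | zero =>
    intro f hf h0
    have hf1 : f = 1 := hf.natDegree_eq_zero.mp h0
    subst hf1
    rw [sylvester_one, Matrix.det_one, Polynomial.roots_one]
    simp
  | succ n ih =>
    intro f hf hdeg
    have hd0 : 0 < f.degree := natDegree_pos_iff_degree_pos.mp (by omega)
    obtain ⟨a, ha⟩ := Complex.exists_root hd0
    obtain ⟨f₁, rfl⟩ := dvd_iff_isRoot.mpr ha
    have hf₁ : f₁.Monic := (monic_X_sub_C a).of_mul_monic_left hf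
    have hd₁ : f₁.natDegree = n := by
      have h2 := natDegree_mul (X_sub_C_ne_zero a) hf₁.ne_zero
      rw [natDegree_X_sub_C] at h2
      omega
    rw [det_syl_step f₁ g hf₁ hg a, ih f₁ hf₁ hd₁,
      roots_mul (mul_ne_zero (X_sub_C_ne_zero a) hf₁.ne_zero), roots_X_sub_C,
      Multiset.singleton_add, Multiset.map_cons, Multiset.prod_cons]

lemma prod_prod_comm (s t : Multiset ℂ) (F : ℂ → ℂ → ℂ) :
    (s.map fun b => (t.map fun a => F b a).prod).prod
      = (t.map fun a => (s.map fun b => F b a).prod).prod := by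
  induction s using Multiset.induction_on with
  | empty => simp
  | cons b s ih =>
    simp only [Multiset.map_cons, Multiset.prod_cons, ih, ← Multiset.prod_map_mul]

lemma eval_eq_prod_roots' (p : Polynomial ℂ) (hp : p.Monic) (x : ℂ) :
    p.eval x = (p.roots.map fun a => x - a).prod := by
  conv_lhs => rw [(IsAlgClosed.splits p).eq_prod_roots_of_monic hp]
  rw [eval_multiset_prod, Multiset.map_map]
  simp

lemma swap_eval (p q : Polynomial ℂ) (hp : p.Monic) (hq : q.Monic) :
    (p.roots.map q.eval).prod =
      (-1 : ℂ) ^ (p.natDegree * q.natDegree) * (q.roots.map p.eval).prod := by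
  have hcp : Multiset.card p.roots = p.natDegree :=
    (splits_iff_card_roots).mp (IsAlgClosed.splits p)
  have hcq : Multiset.card q.roots = q.natDegree :=
    (splits_iff_card_roots).mp (IsAlgClosed.splits q)
  calc (p.roots.map q.eval).prod
      = (p.roots.map fun b => (q.roots.map fun a => b - a).prod).prod := by
        apply congrArg
        exact Multiset.map_congr rfl fun b _ => eval_eq_prod_roots' q hq b
    _ = (q.roots.map fun a => (p.roots.map fun b => b - a).prod).prod :=
        prod_prod_comm _ _ _
    _ = (q.roots.map fun a => (-1 : ℂ) ^ p.natDegree * (p.roots.map fun b => a - b).prod).prod := by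
        apply congrArg
        apply Multiset.map_congr rfl
        intro a _
        have h1 : (p.roots.map fun b => b - a).prod
            = (p.roots.map fun b => (-1 : ℂ) * (a - b)).prod := by
          apply congrArg
          exact Multiset.map_congr rfl fun b _ => by ring
        rw [h1, Multiset.prod_map_mul]
        congr 1
        rw [Multiset.map_const', Multiset.prod_replicate, hcp]
    _ = ((-1 : ℂ) ^ p.natDegree) ^ q.natDegree
          * (q.roots.map fun a => (p.roots.map fun b => a - b).prod).prod := by
        rw [Multiset.prod_map_mul]
        congr 1
        rw [Multiset.map_const', Multiset.prod_replicate, hcq]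
    _ = (-1 : ℂ) ^ (p.natDegree * q.natDegree) * (q.roots.map p.eval).prod := by
        rw [← pow_mul]
        congr 1
        apply congrArg
        exact Multiset.map_congr rfl fun a _ => (eval_eq_prod_roots' p hp a).symm

/-- Let `f`, `g` be the characteristic polynomials (viewed in `ℂ[x]`) of a real symmetric
`(m+1) × (m+1)` matrix `M` and of its principal submatrix deleting row and column `v`.
For `λ₁ ≠ λ₂`, if `μ₁^(j)` and `μ₂^(j)` are the complex roots (with multiplicity) of
`f − λ₁ g` and `f − λ₂ g` respectively, then
`∏_{j₁} ∏_{j₂} (μ₂^(j₂) − μ₁^(j₁)) = (λ₂ − λ₁)^(m+1) · Res(f, g)`. -/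
theorem prod_root_differences_eq {m : ℕ}
    (M : Matrix (Fin (m + 1)) (Fin (m + 1)) ℝ) (hM : M.IsSymm) (v : Fin (m + 1))
    (f g : Polynomial ℂ)
    (hf : f = M.charpoly.map (algebraMap ℝ ℂ))
    (hg : g = (M.submatrix v.succAbove v.succAbove).charpoly.map (algebraMap ℝ ℂ))
    (lam₁ lam₂ : ℂ) (hlam : lam₁ ≠ lam₂) :
    (((f - Polynomial.C lam₂ * g).roots).bind fun b =>
        ((f - Polynomial.C lam₁ * g).roots).map fun a => b - a).prod =
      (lam₂ - lam₁) ^ (m + 1) * _root_.resultant f g := by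
  have hfm : f.Monic := hf ▸ (Matrix.charpoly_monic M).map _
  have hgm : g.Monic := hg ▸ (Matrix.charpoly_monic _).map _
  have hfd : f.natDegree = m + 1 := by
    rw [hf, (Matrix.charpoly_monic M).natDegree_map, Matrix.charpoly_natDegree_eq_dim,
      Fintype.card_fin]
  have hgd : g.natDegree = m := by
    rw [hg, (Matrix.charpoly_monic _).natDegree_map, Matrix.charpoly_natDegree_eq_dim,
      Fintype.card_fin]
  set p₁ := f - Polynomial.C lam₁ * g with hp₁
  set p₂ := f - Polynomial.C lam₂ * g with hp₂
  have hdeg : ∀ lam : ℂ, (-(Polynomial.C lam * g)).degree < f.degree := by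
    intro lam
    rw [degree_neg]
    calc (Polynomial.C lam * g).degree ≤ (Polynomial.C lam).degree + g.degree :=
          degree_mul_le _ _
      _ ≤ 0 + g.degree := add_le_add degree_C_le le_rfl
      _ = g.degree := zero_add _
      _ < f.degree := by
          rw [degree_eq_natDegree hgm.ne_zero, degree_eq_natDegree hfm.ne_zero, hfd, hgd]
          exact_mod_cast Nat.lt_succ_self m
  have hmono : ∀ lam : ℂ, (f - Polynomial.C lam * g).Monic := fun lam => by
    rw [sub_eq_add_neg]; exact hfm.add_of_left (hdeg lam)
  have hdeg' : ∀ lam : ℂ, (f - Polynomial.C lam * g).natDegree = m + 1 := fun lam => by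
    rw [sub_eq_add_neg, ← hfd]
    exact natDegree_eq_of_degree_eq (degree_add_eq_left_of_degree_lt (hdeg lam))
  have hinner : ∀ b : ℂ, (p₁.roots.map fun a => b - a).prod = p₁.eval b :=
    fun b => (eval_eq_prod_roots' p₁ (hmono lam₁) b).symm
  rw [Multiset.prod_bind]
  have hstep1 : (p₂.roots.map fun b => ((p₁.roots.map fun a => b - a)).prod).prod
      = (p₂.roots.map fun b => (lam₂ - lam₁) * g.eval b).prod := by
    apply congrArg
    apply Multiset.map_congr rfl
    intro b hb
    rw [hinner b]
    have hroot : p₂.eval b = 0 := ((Polynomial.mem_roots'.mp hb).2 : p₂.IsRoot b)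
    rw [hp₂] at hroot
    rw [hp₁]
    simp only [eval_sub, eval_mul, eval_C] at hroot ⊢
    linear_combination hroot
  rw [hstep1, Multiset.prod_map_mul]
  have hcard : Multiset.card p₂.roots = m + 1 := by
    rw [(splits_iff_card_roots).mp (IsAlgClosed.splits p₂), hdeg' lam₂]
  rw [show (p₂.roots.map fun _ => lam₂ - lam₁) = Multiset.replicate (m + 1) (lam₂ - lam₁) from by
      rw [Multiset.map_const', hcard],
    Multiset.prod_replicate]
  congr 1
  have h1 : (p₂.roots.map g.eval).prod
      = (-1 : ℂ) ^ ((m + 1) * m) * (g.roots.map p₂.eval).prod := by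
    have h := swap_eval p₂ g (hmono lam₂) hgm
    rwa [hdeg' lam₂, hgd] at h
  have h2 : (g.roots.map p₂.eval).prod = (g.roots.map f.eval).prod := by
    apply congrArg
    apply Multiset.map_congr rfl
    intro a ha
    have hroot : g.eval a = 0 := ((Polynomial.mem_roots'.mp ha).2 : g.IsRoot a)
    rw [hp₂]
    simp [eval_sub, eval_mul, eval_C, hroot]
  have h3 : _root_.resultant f g = (-1 : ℂ) ^ ((m + 1) * m) * (g.roots.map f.eval).prod := by
    rw [resultant_eq_prod f g hfm hgm]
    have h := swap_eval f g hfm hgm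
    rwa [hfd, hgd] at h
  have hsign : ((-1 : ℂ)) ^ ((m + 1) * m) = 1 :=
    Even.neg_one_pow (by rw [mul_comm]; exact Nat.even_mul_succ_self m)
  rw [h1, h2, h3, hsign]
end

section
/- Let U = [ξ₁,…,ξₙ] be an n×n matrix with columns ξ_i, and for each i ∈ {1,…,n} let ζ_i^{(1)},…,ζ_i^{(m)} be vectors in ℝᵐ. Form the mn×mn matrix E whose column indexed by (i,j) (in colexicographic order of (i,j)) is ζ_i^{(j)} ⊗ ξ_i. Then det E = (det U)^m · ∏_{i=1}^n det[ζ_i^{(1)},…,ζ_i^{(m)}]. -/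
open Matrix Finset

open Kronecker in
/-- Let `U = [ξ₁, …, ξₙ]` and, for each `i`, let `Z i = [ζ_i^(1), …, ζ_i^(m)]`.
If `E` is the `mn × mn` matrix whose column indexed by `(j, i)` (colexicographic:
`j` outer, `i` inner) is `ζ_i^(j) ⊗ ξ_i`, then
`det E = (det U)^m · ∏_i det Z i`. -/
theorem det_kronecker_columns {n m : ℕ}
    (ξ : Fin n → Fin n → ℝ) (ζ : Fin n → Fin m → Fin m → ℝ)
    (U : Matrix (Fin n) (Fin n) ℝ) (hU : U = Matrix.of fun k i => ξ i k)
    (Z : Fin n → Matrix (Fin m) (Fin m) ℝ) (hZ : ∀ i, Z i = Matrix.of fun k j => ζ i j k)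
    (E : Matrix (Fin m × Fin n) (Fin m × Fin n) ℝ)
    (hE : E = Matrix.of fun p q => ζ q.2 q.1 p.1 * ξ q.2 p.2) :
    E.det = U.det ^ m * ∏ i, (Z i).det := by
  have hfac : E = ((1 : Matrix (Fin m) (Fin m) ℝ) ⊗ₖ U) * Matrix.blockDiagonal Z := by
    ext ⟨k, l⟩ ⟨j, i⟩
    simp only [hE, hU, hZ, Matrix.mul_apply, Matrix.kronecker_apply,
      Matrix.blockDiagonal_apply, Matrix.one_apply, Fintype.sum_prod_type,
      Matrix.of_apply]
    simp [Finset.sum_ite_eq', Finset.sum_ite_eq, mul_comm]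
  rw [hfac, Matrix.det_mul, Matrix.det_kronecker, Matrix.det_blockDiagonal]
  simp
end
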